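/- Let F be a quadratic map of the plane with coefficients aᵢ, bᵢ such that det DF(x,y) = x² − y for all (x,y) ∈ ℝ², and define α(t) = F(t, t²). Then a₂ = b₂ = 0; α′(t) = (0,0) if and only if t = X₁₃/3 where X₁₃ := a₁b₃ − a₃b₁; and at T = X₁₃/3 one has α₁″(T)α₂‴(T) − α₁‴(T)α₂″(T) = 18 ≠ 0, so the critical image is a curve with exactly one singular point, which is a nondegenerate cusp. -/

import Mathlib

private lemma poly3_hasDerivAt (c3 c2 c1 c0 t : ℝ) :
    HasDerivAt (fun x : ℝ => c3*x^3 + c2*x^2 + (c1*x + c0))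
      (c3*(3*t^2) + c2*(2*t) + (c1*1 + 0)) t := by
  have h := (((hasDerivAt_pow 3 t).const_mul c3).add ((hasDerivAt_pow 2 t).const_mul c2)).add
    (((hasDerivAt_id t).const_mul c1).add (hasDerivAt_const t c0))
  have e : c3*(↑(3:ℕ)*t^(3-1)) + c2*(↑(2:ℕ)*t^(2-1)) + (c1*1 + 0)
      = c3*(3*t^2) + c2*(2*t) + (c1*1 + 0) := by push_cast; ring
  rw [e] at h
  exact h

private lemma poly2_hasDerivAt (c2 c1 c0 t : ℝ) :
    HasDerivAt (fun x : ℝ => c2*x^2 + c1*x + c0) (c2*(2*t) + c1*1 + 0) t := by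
  have h := (((hasDerivAt_pow 2 t).const_mul c2).add ((hasDerivAt_id t).const_mul c1)).add
    (hasDerivAt_const t c0)
  have e : c2*(↑(2:ℕ)*t^(2-1)) + c1*1 + 0 = c2*(2*t) + c1*1 + 0 := by push_cast; ring
  rw [e] at h
  exact h

private lemma poly1_hasDerivAt (c1 c0 t : ℝ) :
    HasDerivAt (fun x : ℝ => c1*x + c0) (c1*1 + 0) t :=
  ((hasDerivAt_id t).const_mul c1).add (hasDerivAt_const t c0)

/-- if a quadratic map `F` of the plane has Jacobian determinant
`x² − y` (so `J₀` is the parabola `y = x²`), and `α(t) = F(t, t²)` parametrizes `J₁`,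
then `a₂ = b₂ = 0`, `α′(t) = 0` iff `t = X₁₃/3`, and at `T = X₁₃/3` one has
`α₁″(T)α₂‴(T) − α₁‴(T)α₂″(T) = 18 ≠ 0`: a single nondegenerate cusp. -/
theorem stmt10 (a0 a1 a2 a3 a4 a5 b0 b1 b2 b3 b4 b5 : ℝ)
    (hdet : ∀ x y : ℝ,
      (2*a0*x + a1*y + a3) * (b1*x + 2*b2*y + b4)
        - (a1*x + 2*a2*y + a4) * (2*b0*x + b1*y + b3) = x^2 - y)
    (α : ℝ → ℝ × ℝ)
    (hα : α = fun t =>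
      (a0*t^2 + a1*t*t^2 + a2*(t^2)^2 + a3*t + a4*t^2 + a5,
       b0*t^2 + b1*t*t^2 + b2*(t^2)^2 + b3*t + b4*t^2 + b5)) :
    a2 = 0 ∧ b2 = 0 ∧
    (∀ t : ℝ, deriv α t = 0 ↔ t = (a1*b3 - a3*b1)/3) ∧
    ((iteratedDeriv 2 α ((a1*b3 - a3*b1)/3)).1 * (iteratedDeriv 3 α ((a1*b3 - a3*b1)/3)).2
      - (iteratedDeriv 3 α ((a1*b3 - a3*b1)/3)).1 * (iteratedDeriv 2 α ((a1*b3 - a3*b1)/3)).2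
      = 18) := by
  -- extract the coefficient identities
  have h1 : 2*(a0*b1 - a1*b0) = 1 := by
    linear_combination (hdet 1 0 + hdet (-1) 0)/2 - hdet 0 0
  have h2 : a0*b2 - a2*b0 = 0 := by
    linear_combination (hdet 1 1 - hdet 1 0 - hdet 0 1 + hdet 0 0)/4
  have h3 : a1*b2 - a2*b1 = 0 := by
    linear_combination ((hdet 0 1 + hdet 0 (-1))/2 - hdet 0 0)/2
  have h4 : 2*(a0*b4 - a4*b0) + (a3*b1 - a1*b3) = 0 := by
    linear_combination (hdet 1 0 - hdet (-1) 0)/2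
  have h5 : a1*b4 - a4*b1 + 2*(a3*b2 - a2*b3) = -1 := by
    linear_combination (hdet 0 1 - hdet 0 (-1))/2
  have h6 : a3*b4 - a4*b3 = 0 := by linear_combination hdet 0 0
  have ha2 : a2 = 0 := by linear_combination 2*a1*h2 - 2*a0*h3 - a2*h1
  have hb2 : b2 = 0 := by linear_combination 2*b1*h2 - 2*b0*h3 - b2*h1
  subst ha2 hb2
  have h5' : a1*b4 - a4*b1 = -1 := by linear_combination h5
  have ha4 : a4 = 2*a0 + (a1*b3 - a3*b1)*a1 := by
    linear_combination (-2*a0)*h5' + a1*h4 - a4*h1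
  have hb4 : b4 = 2*b0 + (a1*b3 - a3*b1)*b1 := by
    linear_combination b1*h4 - 2*b0*h5' - b4*h1
  have ha3 : a3 = -(2*(a1*b3 - a3*b1))*a0 - (a1*b3 - a3*b1)^2*a1 := by
    linear_combination (-a1)*h6 + (a1*a3)*hb4 - (a1*b3)*ha4 - a3*h1
  have hb3 : b3 = -(2*(a1*b3 - a3*b1))*b0 - (a1*b3 - a3*b1)^2*b1 := by
    linear_combination (-b1)*h6 + (a3*b1)*hb4 - (b1*b3)*ha4 - b3*h1
  -- rewrite α as a pair of cubics
  have hα' : α = fun t =>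
      (a1*t^3 + (a0+a4)*t^2 + (a3*t + a5), b1*t^3 + (b0+b4)*t^2 + (b3*t + b5)) := by
    rw [hα]; funext t; simp only [Prod.mk.injEq]; constructor <;> ring
  -- first derivative
  have hd : deriv α = fun t =>
      (a1*(3*t^2) + (a0+a4)*(2*t) + (a3*1 + 0), b1*(3*t^2) + (b0+b4)*(2*t) + (b3*1 + 0)) := by
    funext t
    rw [hα']
    exact (HasDerivAt.prodMk (poly3_hasDerivAt a1 (a0+a4) a3 a5 t)
      (poly3_hasDerivAt b1 (b0+b4) b3 b5 t)).deriv
  have hd' : deriv α = fun t =>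
      (3*a1*t^2 + 2*(a0+a4)*t + a3, 3*b1*t^2 + 2*(b0+b4)*t + b3) := by
    rw [hd]; funext t; simp only [Prod.mk.injEq]; constructor <;> ring
  -- second derivative
  have hd2 : iteratedDeriv 2 α = fun t =>
      (3*a1*(2*t) + 2*(a0+a4)*1 + 0, 3*b1*(2*t) + 2*(b0+b4)*1 + 0) := by
    rw [show iteratedDeriv 2 α = deriv (iteratedDeriv 1 α) from iteratedDeriv_succ, iteratedDeriv_one, hd']
    funext t
    exact (HasDerivAt.prodMk (poly2_hasDerivAt (3*a1) (2*(a0+a4)) a3 t)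
      (poly2_hasDerivAt (3*b1) (2*(b0+b4)) b3 t)).deriv
  -- third derivative
  have hd3 : iteratedDeriv 3 α = fun _ =>
      ((3*a1*2)*1 + 0, (3*b1*2)*1 + 0) := by
    rw [show (3:ℕ) = 2+1 from rfl, iteratedDeriv_succ, hd2]
    funext t
    have e1 : (fun t : ℝ => 3*a1*(2*t) + 2*(a0+a4)*1 + 0)
        = fun t : ℝ => (3*a1*2)*t + (2*(a0+a4)*1 + 0) := by funext t; ring
    have e2 : (fun t : ℝ => 3*b1*(2*t) + 2*(b0+b4)*1 + 0)
        = fun t : ℝ => (3*b1*2)*t + (2*(b0+b4)*1 + 0) := by funext t; ring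
    have : (fun t : ℝ => (3*a1*(2*t) + 2*(a0+a4)*1 + 0, 3*b1*(2*t) + 2*(b0+b4)*1 + 0))
        = fun t : ℝ => ((3*a1*2)*t + (2*(a0+a4)*1 + 0), (3*b1*2)*t + (2*(b0+b4)*1 + 0)) := by
      funext t; simp only [Prod.mk.injEq]; constructor <;> ring
    rw [this]
    exact (HasDerivAt.prodMk (poly1_hasDerivAt (3*a1*2) (2*(a0+a4)*1 + 0) t)
      (poly1_hasDerivAt (3*b1*2) (2*(b0+b4)*1 + 0) t)).deriv
  refine ⟨rfl, rfl, ?_, ?_⟩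
  · intro t
    rw [hd']
    constructor
    · intro h
      rw [Prod.ext_iff] at h
      obtain ⟨hp1, hp2⟩ := h
      simp only [Prod.fst_zero, Prod.snd_zero] at hp1 hp2
      linear_combination (b1/3)*hp1 - (a1/3)*hp2 - (t/3)*h1 + (2*t/3)*h5'
    · intro h
      subst h
      rw [Prod.ext_iff]
      simp only [Prod.fst_zero, Prod.snd_zero]
      constructor
      · linear_combination ha3 + (2*(a1*b3 - a3*b1)/3)*ha4
      · linear_combination hb3 + (2*(a1*b3 - a3*b1)/3)*hb4
  · rw [hd2, hd3]
    simp only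
    linear_combination 6*h1 - 12*h5'
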